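/- arXiv:2311.15321 — 2 statements merged into one kernel-verified Lean document; each statement's English description precedes it below -/
import Mathlib

section
/- Let Γ be a signed graph with a non-negative unit eigenvector x for its largest eigenvalue λ₁(Γ). If Γ′ is obtained from Γ by deleting some negative edges, then λ₁(Γ′) ≥ λ₁(Γ), with equality only if x vanishes at every endpoint of every deleted edge. -/
open Matrix

/-- The largest eigenvalue (index) of a real symmetric matrix. -/
noncomputable def lam1 {n : ℕ} (A : Matrix (Fin n) (Fin n) ℝ) (hA : A.IsHermitian) : ℝ :=
  ⨆ i, hA.eigenvalues i

lemma rayleigh_le {n : ℕ} [NeZero n] (A : Matrix (Fin n) (Fin n) ℝ) (hA : A.IsHermitian)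
    (v : Fin n → ℝ) :
    v ⬝ᵥ A *ᵥ v ≤ lam1 A hA * (v ⬝ᵥ v) ∧
    (v ⬝ᵥ A *ᵥ v = lam1 A hA * (v ⬝ᵥ v) → A *ᵥ v = lam1 A hA • v) := by
  set b := hA.eigenvectorBasis with hb
  set μ := lam1 A hA with hμ
  have hsymm : ∀ i j, A j i = A i j := by
    intro i j
    have := congrFun (congrFun hA.eq i) j
    simpa [Matrix.conjTranspose_apply] using this
  let w : EuclideanSpace ℝ (Fin n) := WithLp.toLp 2 v
  set d : Fin n → ℝ := fun j => inner (𝕜 := ℝ) (b j) w with hd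
  have hinner : ∀ (u u' : EuclideanSpace ℝ (Fin n)),
      inner (𝕜 := ℝ) u u' = (u : Fin n → ℝ) ⬝ᵥ (u' : Fin n → ℝ) := by
    intro u u'
    simp [PiLp.inner_apply, dotProduct, mul_comm]
  have hAb : ∀ j, (b j : Fin n → ℝ) ⬝ᵥ (A *ᵥ v) = hA.eigenvalues j * d j := by
    intro j
    rw [Matrix.dotProduct_mulVec]
    have h1 : (b j : Fin n → ℝ) ᵥ* A = A *ᵥ (b j : Fin n → ℝ) := by
      funext k
      simp only [Matrix.vecMul, Matrix.mulVec, dotProduct]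
      exact Finset.sum_congr rfl fun i _ => by rw [hsymm k i, mul_comm]
    have h2 : A *ᵥ (b j : Fin n → ℝ) = hA.eigenvalues j • (b j : Fin n → ℝ) :=
      hA.mulVec_eigenvectorBasis j
    rw [h1, h2]
    simp only [hd, PiLp.inner_apply, RCLike.inner_apply, starRingEnd_apply, star_trivial,
      smul_dotProduct, smul_eq_mul, dotProduct, Finset.mul_sum]
    exact Finset.sum_congr rfl fun i _ => by simp only [Pi.smul_apply, smul_eq_mul]; change _ = _ * (v i * _); ring
  have hray : v ⬝ᵥ (A *ᵥ v) = ∑ j, hA.eigenvalues j * (d j * d j) := by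
    have h2 := b.sum_inner_mul_inner w (WithLp.toLp 2 (A *ᵥ v) : EuclideanSpace ℝ (Fin n))
    rw [hinner] at h2
    calc v ⬝ᵥ (A *ᵥ v) = ∑ j, inner (𝕜 := ℝ) w (b j) * inner (𝕜 := ℝ) (b j)
          ((WithLp.toLp 2 (A *ᵥ v) : EuclideanSpace ℝ (Fin n))) := h2.symm
      _ = ∑ j, hA.eigenvalues j * (d j * d j) := by
          refine Finset.sum_congr rfl fun j _ => ?_
          rw [real_inner_comm, hinner (b j) (WithLp.toLp 2 (A *ᵥ v))]
          show d j * ((b j : Fin n → ℝ) ⬝ᵥ (A *ᵥ v)) = _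
          rw [hAb j]; ring
  have hvv : v ⬝ᵥ v = ∑ j, d j * d j := by
    have h2 := b.sum_inner_mul_inner w w
    rw [hinner] at h2
    rw [show v ⬝ᵥ v = w.ofLp ⬝ᵥ w.ofLp from rfl, ← h2]
    refine Finset.sum_congr rfl fun j _ => ?_
    rw [real_inner_comm]
  have hle : ∀ j, hA.eigenvalues j ≤ μ :=
    fun j => le_ciSup (Set.Finite.bddAbove (Set.finite_range _)) j
  constructor
  · rw [hray, hvv, Finset.mul_sum]
    exact Finset.sum_le_sum fun j _ =>
      mul_le_mul_of_nonneg_right (hle j) (mul_self_nonneg _)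
  · intro heq
    have hz : ∀ j ∈ Finset.univ, (μ - hA.eigenvalues j) * (d j * d j) = 0 := by
      rw [← Finset.sum_eq_zero_iff_of_nonneg
        (fun j _ => mul_nonneg (sub_nonneg.2 (hle j)) (mul_self_nonneg _))]
      have : ∑ j, (μ - hA.eigenvalues j) * (d j * d j)
          = μ * (v ⬝ᵥ v) - v ⬝ᵥ (A *ᵥ v) := by
        rw [hray, hvv, Finset.mul_sum, ← Finset.sum_sub_distrib]
        exact Finset.sum_congr rfl fun j _ => by ring
      rw [this, heq, sub_self]
    have hkey : ∀ j, hA.eigenvalues j • d j = μ • d j := by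
      intro j
      have := hz j (Finset.mem_univ j)
      rcases mul_eq_zero.1 this with h | h
      · have : hA.eigenvalues j = μ := by linarith [sub_eq_zero.1 h]
        rw [this]
      · have : d j = 0 := by
          rcases mul_self_eq_zero.1 h with h'
          exact h'
        simp [this]
    -- express v via basis
    have hrepr : ∑ j, d j • (b j) = w := b.sum_repr' w
    have hv : v = fun k => ∑ j, d j * (b j : Fin n → ℝ) k := by
      funext k
      have h3 : inner (𝕜 := ℝ) (EuclideanSpace.single k (1:ℝ)) w = v k := by
        simp [EuclideanSpace.inner_single_left]; rfl
      rw [← h3, ← hrepr, inner_sum]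
      exact Finset.sum_congr rfl fun j _ => by
        simp [real_inner_smul_right, EuclideanSpace.inner_single_left]
    have hlin : A *ᵥ (fun k => ∑ j, d j * (b j : Fin n → ℝ) k)
        = fun i => ∑ j, d j * (A *ᵥ (b j : Fin n → ℝ)) i := by
      funext i
      simp only [Matrix.mulVec, dotProduct, Finset.mul_sum]
      rw [Finset.sum_comm]
      exact Finset.sum_congr rfl fun j _ => Finset.sum_congr rfl fun k _ => by ring
    have hAbj : ∀ j, A *ᵥ (b j : Fin n → ℝ) = hA.eigenvalues j • (b j : Fin n → ℝ) :=
      fun j => hA.mulVec_eigenvectorBasis j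
    calc A *ᵥ v = fun i => ∑ j, d j * (A *ᵥ (b j : Fin n → ℝ)) i := by rw [hv] at *; exact hlin
      _ = fun i => ∑ j, (μ * d j) * (b j : Fin n → ℝ) i := by
          funext i
          refine Finset.sum_congr rfl fun j _ => ?_
          rw [hAbj j]
          have := hkey j
          simp only [smul_eq_mul] at this
          simp only [Pi.smul_apply, smul_eq_mul]
          calc d j * (hA.eigenvalues j * (b j : Fin n → ℝ) i)
              = (hA.eigenvalues j * d j) * (b j : Fin n → ℝ) i := by ring
            _ = (μ * d j) * (b j : Fin n → ℝ) i := by rw [this]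
      _ = μ • v := by
          funext i
          rw [hv]
          simp only [Pi.smul_apply, smul_eq_mul, Finset.mul_sum]
          exact Finset.sum_congr rfl fun j _ => by ring

/-- Let `Γ` (adjacency matrix `A`) have a non-negative unit eigenvector `x` for `λ₁(Γ)`.
If `Γ′` (adjacency matrix `A′`) is obtained from `Γ` by deleting some negative
edges (changing entries `−1` to `0`), then `λ₁(Γ′) ≥ λ₁(Γ)`, with equality only if `x`
vanishes at both endpoints of every deleted edge. -/
theorem stmt7 {n : ℕ} (A A' : Matrix (Fin n) (Fin n) ℝ)
    (hA : A.IsHermitian) (hA' : A'.IsHermitian)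
    (hdiag : ∀ i, A i i = 0)
    (hent : ∀ i j, A i j = -1 ∨ A i j = 0 ∨ A i j = 1)
    (hchange : ∀ i j, A' i j = A i j ∨ (A i j = -1 ∧ A' i j = 0))
    (x : Fin n → ℝ) (hx : ∀ i, 0 ≤ x i) (hunit : ∑ i, x i ^ 2 = 1)
    (heig : A.mulVec x = lam1 A hA • x) :
    lam1 A hA ≤ lam1 A' hA' ∧
      (lam1 A' hA' = lam1 A hA → ∀ i j, A' i j ≠ A i j → x i = 0 ∧ x j = 0) := by
  have hn : NeZero n := by
    constructor; rintro rfl; simp at hunit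
  have hxx : x ⬝ᵥ x = 1 := by
    simpa [dotProduct, sq] using hunit
  have hAx : x ⬝ᵥ A *ᵥ x = lam1 A hA := by
    rw [show A *ᵥ x = lam1 A hA • x from heig]
    rw [dotProduct_smul, hxx]; simp
  have hrow : ∀ i, (A *ᵥ x) i ≤ (A' *ᵥ x) i := by
    intro i
    simp only [Matrix.mulVec, dotProduct]
    refine Finset.sum_le_sum fun j _ => ?_
    rcases hchange i j with h | ⟨h1, h2⟩
    · rw [h]
    · rw [h1, h2]; nlinarith [hx j]
  have hdiff : x ⬝ᵥ A *ᵥ x ≤ x ⬝ᵥ A' *ᵥ x :=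
    Finset.sum_le_sum fun i _ => mul_le_mul_of_nonneg_left (hrow i) (hx i)
  have h1 := (rayleigh_le A' hA' x).1
  rw [hxx, mul_one] at h1
  constructor
  · calc lam1 A hA = x ⬝ᵥ A *ᵥ x := hAx.symm
      _ ≤ x ⬝ᵥ A' *ᵥ x := hdiff
      _ ≤ lam1 A' hA' := h1
  · intro heq i j hne
    have he1 : x ⬝ᵥ A' *ᵥ x = lam1 A' hA' * (x ⬝ᵥ x) := by
      rw [hxx, mul_one]
      refine le_antisymm h1 ?_
      rw [heq, ← hAx]; exact hdiff
    have hev := (rayleigh_le A' hA' x).2 he1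
    have hzero : A' *ᵥ x = A *ᵥ x := by
      rw [hev, heig, heq]
    have hrowzero : ∀ p q, A' p q ≠ A p q → x q = 0 := by
      intro p q hpq
      have h0 : ∑ k, (A' p k - A p k) * x k = 0 := by
        have hp := congrFun hzero p
        simp only [Matrix.mulVec, dotProduct] at hp
        have : ∑ k, (A' p k - A p k) * x k
            = ∑ k, A' p k * x k - ∑ k, A p k * x k := by
          rw [← Finset.sum_sub_distrib]
          exact Finset.sum_congr rfl fun k _ => by ring
        rw [this, hp, sub_self]
      have hterm : ∀ k ∈ Finset.univ, 0 ≤ (A' p k - A p k) * x k := by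
        intro k _
        rcases hchange p k with h | ⟨h1', h2'⟩
        · simp [h]
        · rw [h1', h2']; nlinarith [hx k]
      have hq := (Finset.sum_eq_zero_iff_of_nonneg hterm).1 h0 q (Finset.mem_univ q)
      rcases hchange p q with h | ⟨h1', h2'⟩
      · exact absurd h hpq
      · rw [h1', h2'] at hq; linarith
    have hsA : ∀ p q, A q p = A p q := by
      intro p q
      have := congrFun (congrFun hA.eq p) q
      simpa [Matrix.conjTranspose_apply] using this
    have hsA' : ∀ p q, A' q p = A' p q := by
      intro p q
      have := congrFun (congrFun hA'.eq p) q
      simpa [Matrix.conjTranspose_apply] using this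
    refine ⟨hrowzero j i ?_, hrowzero i j hne⟩
    rw [hsA' i j, hsA i j]
    exact hne
end

section
/- In an unbalanced signed graph, every negative cycle of minimum length is chordless (induced): no two non-consecutive vertices of the cycle are adjacent in the graph. -/
/-- The sign of a walk in a signed graph: the product of the edge signs along the walk. -/
def walkSign {V : Type*} {G : SimpleGraph V} (σ : V → V → ℝ) {u v : V} (p : G.Walk u v) : ℝ :=
  (p.darts.map fun d => σ d.toProd.1 d.toProd.2).prod

lemma walkSign_cons {V : Type*} {G : SimpleGraph V} (σ : V → V → ℝ) {u v w : V}
    (h : G.Adj u v) (p : G.Walk v w) :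
    walkSign σ (SimpleGraph.Walk.cons h p) = σ u v * walkSign σ p := by
  simp [walkSign]

lemma walkSign_append {V : Type*} {G : SimpleGraph V} (σ : V → V → ℝ) {u v w : V}
    (p : G.Walk u v) (q : G.Walk v w) :
    walkSign σ (p.append q) = walkSign σ p * walkSign σ q := by
  simp [walkSign, SimpleGraph.Walk.darts_append]

lemma walkSign_rotate {V : Type*} [DecidableEq V] {G : SimpleGraph V} (σ : V → V → ℝ) {u v : V}
    (c : G.Walk v v) (h : u ∈ c.support) :
    walkSign σ (c.rotate u h) = walkSign σ c := by
  unfold walkSign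
  exact ((c.rotate_darts u h).perm.map _).prod_eq

lemma walkSign_unit {V : Type*} {G : SimpleGraph V} (σ : V → V → ℝ)
    (hval : ∀ i j, G.Adj i j → σ i j = 1 ∨ σ i j = -1) {u v : V} (p : G.Walk u v) :
    walkSign σ p = 1 ∨ walkSign σ p = -1 := by
  induction p with
  | nil => left; simp [walkSign]
  | cons h q ih =>
    rw [walkSign_cons]
    rcases hval _ _ h with h1 | h1 <;> rcases ih with h2 | h2 <;> simp [h1, h2]

lemma walkSign_length_rotate {V : Type*} [DecidableEq V] {G : SimpleGraph V} {u v : V}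
    (c : G.Walk v v) (h : u ∈ c.support) : (c.rotate u h).length = c.length := by
  rw [← SimpleGraph.Walk.length_darts (c.rotate u h), ← SimpleGraph.Walk.length_darts c]
  exact (c.rotate_darts u h).perm.length_eq

lemma edge_mem_of_length_one {V : Type*} {G : SimpleGraph V} {a b : V}
    (q : G.Walk a b) (h : q.length = 1) : s(a, b) ∈ q.edges := by
  cases q with
  | nil => simp at h
  | @cons _ x _ h' q' =>
    obtain rfl : x = b := q'.eq_of_length_eq_zero (by simpa using h)
    simp

/-- In a signed graph, every negative cycle of minimum length is chordless: any edge of the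
graph joining two vertices of the cycle is an edge of the cycle itself. -/
theorem stmt9 {V : Type*} (G : SimpleGraph V) (σ : V → V → ℝ)
    (hsym : ∀ i j, σ i j = σ j i)
    (hval : ∀ i j, G.Adj i j → σ i j = 1 ∨ σ i j = -1)
    {v : V} (p : G.Walk v v) (hp : p.IsCycle) (hneg : walkSign σ p = -1)
    (hmin : ∀ (u : V) (q : G.Walk u u), q.IsCycle → walkSign σ q = -1 → p.length ≤ q.length)
    (a b : V) (ha : a ∈ p.support) (hb : b ∈ p.support) (hab : G.Adj a b) :
    s(a, b) ∈ p.edges := by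
  classical
  by_contra hcn
  have hne : a ≠ b := hab.ne
  -- rotate the cycle to start at `a`
  set p' : G.Walk a a := p.rotate a ha with hp'def
  have hp' : p'.IsCycle := hp.rotate ha
  have hb' : b ∈ p'.support := by
    have h1 : b ∈ p'.support.tail := by
      rw [(SimpleGraph.Walk.support_rotate p a ha).mem_iff]
      have hps0 : p.support = v :: p.support.tail := SimpleGraph.Walk.support_eq_cons p
      rw [hps0] at hb
      rcases List.mem_cons.mp hb with h | h
      · subst h
        cases p with
        | nil => exact absurd rfl hp.ne_nil
        | cons h' t => simpa using t.end_mem_support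
      · exact h
    exact List.mem_of_mem_tail h1
  have hneg' : walkSign σ p' = -1 := by rw [hp'def, walkSign_rotate]; exact hneg
  have hlen' : p'.length = p.length := walkSign_length_rotate p ha
  have hedges' : s(a,b) ∉ p'.edges := fun h => hcn ((p.rotate_edges a ha).perm.mem_iff.mp h)
  -- split at b
  set q : G.Walk a b := p'.takeUntil b hb' with hq
  set r : G.Walk b a := p'.dropUntil b hb' with hr
  have hspec : q.append r = p' := p'.take_spec hb'
  -- support facts
  have hps : p'.support = a :: p'.support.tail := SimpleGraph.Walk.support_eq_cons p'
  have hqs : q.support = a :: q.support.tail := SimpleGraph.Walk.support_eq_cons q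
  have hrs : r.support = b :: r.support.tail := SimpleGraph.Walk.support_eq_cons r
  have htail : p'.support.tail = q.support.tail ++ r.support.tail := by
    rw [← hspec]; exact SimpleGraph.Walk.tail_support_append q r
  have hnodup : p'.support.tail.Nodup := hp'.2
  rw [htail, List.nodup_append] at hnodup
  obtain ⟨hnq, hnr, hdisj⟩ := hnodup
  have hbq : b ∈ q.support.tail := by
    have := SimpleGraph.Walk.end_mem_support q
    rw [hqs] at this
    rcases List.mem_cons.mp this with h | h
    · exact absurd h.symm hne
    · exact h
  have har : a ∈ r.support.tail := by
    have := SimpleGraph.Walk.end_mem_support r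
    rw [hrs] at this
    rcases List.mem_cons.mp this with h | h
    · exact absurd h hne
    · exact h
  have hqpath : q.IsPath := by
    constructor
    · exact hp'.isTrail.takeUntil hb'
    · rw [hqs]
      exact List.nodup_cons.mpr ⟨fun h => (hdisj _ h _ har rfl), hnq⟩
  have hrpath : r.IsPath := by
    constructor
    · exact hp'.isTrail.dropUntil hb'
    · rw [hrs]
      exact List.nodup_cons.mpr ⟨fun h => (hdisj _ hbq _ h rfl), hnr⟩
  have hqe : s(a,b) ∉ q.edges := fun h => hedges' (SimpleGraph.Walk.edges_takeUntil_subset p' hb' h)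
  have hre : s(a,b) ∉ r.edges := fun h => hedges' (SimpleGraph.Walk.edges_dropUntil_subset p' hb' h)
  -- the two smaller cycles
  set c1 : G.Walk a a := SimpleGraph.Walk.cons hab r with hc1
  set c2 : G.Walk b b := SimpleGraph.Walk.cons hab.symm q with hc2
  have hc1cyc : c1.IsCycle :=
    (SimpleGraph.Walk.cons_isCycle_iff r hab).mpr ⟨hrpath, hre⟩
  have hc2cyc : c2.IsCycle :=
    (SimpleGraph.Walk.cons_isCycle_iff q hab.symm).mpr ⟨hqpath, by rwa [Sym2.eq_swap]⟩
  -- lengths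
  have hsum : q.length + r.length = p.length := by
    rw [← hlen', ← hspec, SimpleGraph.Walk.length_append]
  have hq1 : q.length ≠ 0 := by
    intro h
    have := SimpleGraph.Walk.eq_of_length_eq_zero h
    exact hne this
  have hr1 : r.length ≠ 0 := by
    intro h
    have := SimpleGraph.Walk.eq_of_length_eq_zero h
    exact hne this.symm
  have hq2 : 2 ≤ q.length := by
    rcases Nat.lt_or_ge q.length 2 with h | h
    · have : q.length = 0 ∨ q.length = 1 := by omega
      rcases this with h0 | h1
      · exact absurd (SimpleGraph.Walk.eq_of_length_eq_zero h0) hne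
      · exact absurd (edge_mem_of_length_one q h1) hqe
    · exact h
  have hr2 : 2 ≤ r.length := by
    rcases Nat.lt_or_ge r.length 2 with h | h
    · have : r.length = 0 ∨ r.length = 1 := by omega
      rcases this with h0 | h1
      · exact absurd (SimpleGraph.Walk.eq_of_length_eq_zero h0).symm hne
      · refine absurd ?_ hre
        rw [Sym2.eq_swap]
        exact edge_mem_of_length_one r h1
    · exact h
  have hc1len : c1.length < p.length := by
    have : c1.length = r.length + 1 := by simp [hc1]
    omega
  have hc2len : c2.length < p.length := by
    have : c2.length = q.length + 1 := by simp [hc2]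
    omega
  -- signs
  have hsq : σ a b = 1 ∨ σ a b = -1 := hval a b hab
  have hprod : walkSign σ c1 * walkSign σ c2 = -1 := by
    rw [hc1, hc2, walkSign_cons, walkSign_cons]
    have h1 : walkSign σ q * walkSign σ r = -1 := by
      rw [← walkSign_append, hspec]; exact hneg'
    have h2 : σ b a = σ a b := hsym b a
    rcases hsq with h | h <;> rw [h2, h] <;> ring_nf <;> nlinarith [h1]
  rcases walkSign_unit σ hval c1 with h1 | h1
  · have h2 : walkSign σ c2 = -1 := by
      rw [h1, one_mul] at hprod; exact hprod
    exact absurd (hmin b c2 hc2cyc h2) (by omega)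
  · exact absurd (hmin a c1 hc1cyc h1) (by omega)
end
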